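/- Divergence-free stress-energy tensor for the flat-target Dirac-harmonic map system: let φ : ℝⁿ → ℝᵐ be smooth and harmonic (Δφ = 0) and let ψ = (ψ¹,…,ψᵐ) : ℝⁿ → (ℂᴺ)ᵐ be a smooth vector spinor with Dψ = 0 (i.e. ∑ᵢγᵢ∂ᵢψ^α = 0 for each α). Define S_{ij} := 2⟨∂ᵢφ, ∂ⱼφ⟩_{ℝᵐ} − δᵢⱼ|dφ|² + ½⟨ψ, γᵢ∂ⱼψ + γⱼ∂ᵢψ⟩ for 1 ≤ i,j ≤ n, where |dφ|² := ∑ᵢ|∂ᵢφ|². Then S is symmetric, ∑ⱼ₌₁ⁿ ∂ⱼS_{ij} = 0 for every i, and ∑ᵢ₌₁ⁿ S_{ii} = (2−n)|dφ|². -/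

import Mathlib

open Matrix MeasureTheory

noncomputable section

/-- Partial derivative of `f` in the `i`-th coordinate direction at `x`. -/
def epd {n : ℕ} {E : Type*} [NormedAddCommGroup E] [NormedSpace ℝ E]
    (f : EuclideanSpace ℝ (Fin n) → E) (i : Fin n) (x : EuclideanSpace ℝ (Fin n)) : E :=
  fderiv ℝ f x (EuclideanSpace.single i 1)

/-- Real part of the standard Hermitian inner product on `ℂᴺ`. -/
def rinner {N : ℕ} (a b : Fin N → ℂ) : ℝ := (∑ k, star (a k) * b k).re

/-- Real part of the Hermitian inner product on `(ℂᴺ)ᵐ`, summed over the `m` components. -/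
def rinnerV {m N : ℕ} (a b : Fin m → Fin N → ℂ) : ℝ := ∑ α, rinner (a α) (b α)

/-- Squared Hermitian norm on `(ℂᴺ)ᵐ`. -/
def nsqV {m N : ℕ} (a : Fin m → Fin N → ℂ) : ℝ := rinnerV a a

/-- The matrices `γᵢ` are skew-Hermitian and satisfy the Clifford relations
`γᵢγⱼ + γⱼγᵢ = -2 δᵢⱼ Id`. -/
def IsCliffordFamily {n N : ℕ} (γ : Fin n → Matrix (Fin N) (Fin N) ℂ) : Prop :=
  (∀ i, (γ i)ᴴ = -(γ i)) ∧
  (∀ i j, γ i * γ j + γ j * γ i =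
    if i = j then -(2 : ℂ) • (1 : Matrix (Fin N) (Fin N) ℂ) else 0)

/-- The Euclidean Dirac operator acting diagonally on vector spinors `ψ : ℝⁿ → (ℂᴺ)ᵐ`. -/
def DiracV {n N m : ℕ} (γ : Fin n → Matrix (Fin N) (Fin N) ℂ)
    (ψ : EuclideanSpace ℝ (Fin n) → (Fin m → Fin N → ℂ))
    (x : EuclideanSpace ℝ (Fin n)) : Fin m → Fin N → ℂ :=
  fun α => ∑ i, (γ i).mulVec (epd ψ i x α)

/-- The Euclidean inner product `⟨∂ᵢφ, ∂ⱼφ⟩` of partial derivatives of a map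
`φ : ℝⁿ → ℝᵐ`. -/
def dphiInner {n m : ℕ} (φ : EuclideanSpace ℝ (Fin n) → (Fin m → ℝ)) (i j : Fin n)
    (x : EuclideanSpace ℝ (Fin n)) : ℝ :=
  ∑ a, epd φ i x a * epd φ j x a

/-- `φ` is harmonic: `Δφ = 0` componentwise. -/
def IsHarmonic {n m : ℕ} (φ : EuclideanSpace ℝ (Fin n) → (Fin m → ℝ)) : Prop :=
  ∀ x, ∑ i, epd (epd φ i) i x = 0

/-- The stress-energy tensor of the flat-target Dirac-harmonic map system:
`S_{ij} = 2⟨∂ᵢφ,∂ⱼφ⟩ - δᵢⱼ|dφ|² + ½⟨ψ, γᵢ∂ⱼψ + γⱼ∂ᵢψ⟩`. -/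
def dhStress {n N m : ℕ} (γ : Fin n → Matrix (Fin N) (Fin N) ℂ)
    (φ : EuclideanSpace ℝ (Fin n) → (Fin m → ℝ))
    (ψ : EuclideanSpace ℝ (Fin n) → (Fin m → Fin N → ℂ)) (i j : Fin n)
    (x : EuclideanSpace ℝ (Fin n)) : ℝ :=
  2 * dphiInner φ i j x - (if i = j then 1 else 0) * (∑ i', dphiInner φ i' i' x)
    + (1 / 2 : ℝ) * rinnerV (ψ x)
        (fun α => (γ i).mulVec (epd ψ j x α) + (γ j).mulVec (epd ψ i x α))

/-! ### Auxiliary calculus lemmas for `epd` -/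

section EpdLemmas

variable {n : ℕ} {E F : Type*} [NormedAddCommGroup E] [NormedSpace ℝ E]
  [NormedAddCommGroup F] [NormedSpace ℝ F] {x : EuclideanSpace ℝ (Fin n)} {i : Fin n}

lemma epd_contDiff {f : EuclideanSpace ℝ (Fin n) → E} (hf : ContDiff ℝ (⊤:ℕ∞) f) (i : Fin n) :
    ContDiff ℝ (⊤:ℕ∞) (epd f i) := by
  have h : ContDiff ℝ (⊤:ℕ∞) (fderiv ℝ f) := hf.fderiv_right (by exact_mod_cast le_top)
  exact h.clm_apply contDiff_const

lemma epd_diff {f : EuclideanSpace ℝ (Fin n) → E} (hf : ContDiff ℝ (⊤:ℕ∞) f) (i : Fin n) :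
    Differentiable ℝ (epd f i) := (epd_contDiff hf i).differentiable (by simp)

lemma epd_clm {f : EuclideanSpace ℝ (Fin n) → E}
    (L : E →L[ℝ] F) (hf : DifferentiableAt ℝ f x) (i : Fin n) :
    epd (fun y => L (f y)) i x = L (epd f i x) := by
  unfold epd
  rw [show (fun y => L (f y)) = L ∘ f from rfl, fderiv_comp x L.differentiableAt hf]
  simp

lemma epd_comm {f : EuclideanSpace ℝ (Fin n) → E} (hf : ContDiff ℝ (⊤:ℕ∞) f)
    (i j : Fin n) (x : EuclideanSpace ℝ (Fin n)) :
    epd (epd f i) j x = epd (epd f j) i x := by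
  have hd : ContDiff ℝ (⊤:ℕ∞) (fderiv ℝ f) := hf.fderiv_right (by exact_mod_cast le_top)
  have key : ∀ v w, fderiv ℝ (fderiv ℝ f) x v w = fderiv ℝ (fderiv ℝ f) x w v :=
    second_derivative_symmetric
      (fun y => (hf.differentiable (by simp) y).hasFDerivAt)
      ((hd.differentiable (by simp) x).hasFDerivAt)
  have h1 : ∀ (v : EuclideanSpace ℝ (Fin n)) (k : Fin n),
      epd (fun y => fderiv ℝ f y v) k x = fderiv ℝ (fderiv ℝ f) x (EuclideanSpace.single k 1) v := by
    intro v k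
    unfold epd
    rw [fderiv_clm_apply (hd.differentiable (by simp) x) (differentiableAt_const v)]
    simp
  unfold epd
  calc fderiv ℝ (fun y => fderiv ℝ f y (EuclideanSpace.single i 1)) x (EuclideanSpace.single j 1)
      = fderiv ℝ (fderiv ℝ f) x (EuclideanSpace.single j 1) (EuclideanSpace.single i 1) := by
        have := h1 (EuclideanSpace.single i 1) j; unfold epd at this; exact this
    _ = fderiv ℝ (fderiv ℝ f) x (EuclideanSpace.single i 1) (EuclideanSpace.single j 1) := key _ _
    _ = fderiv ℝ (fun y => fderiv ℝ f y (EuclideanSpace.single j 1)) x (EuclideanSpace.single i 1) := by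
        have := h1 (EuclideanSpace.single j 1) i; unfold epd at this; exact this.symm

lemma epd_apply {ι : Type*} [Fintype ι] {φ' : ι → Type*} [∀ a, NormedAddCommGroup (φ' a)]
    [∀ a, NormedSpace ℝ (φ' a)] {f : EuclideanSpace ℝ (Fin n) → (∀ a, φ' a)}
    (hf : DifferentiableAt ℝ f x) (i : Fin n) (a : ι) :
    epd f i x a = epd (fun y => f y a) i x := by
  rw [show (fun y => f y a) = (fun y => (ContinuousLinearMap.proj (R := ℝ) a) (f y)) from rfl,
    epd_clm _ hf]
  rfl

lemma epd_zero : epd (fun _ : EuclideanSpace ℝ (Fin n) => (0 : E)) i x = 0 := by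
  unfold epd; rw [fderiv_fun_const]; simp

lemma epd_congr {f g : EuclideanSpace ℝ (Fin n) → E} (h : ∀ y, f y = g y) :
    epd f i x = epd g i x := by
  unfold epd; rw [show f = g from funext h]

lemma epd_add {f g : EuclideanSpace ℝ (Fin n) → E} (hf : DifferentiableAt ℝ f x)
    (hg : DifferentiableAt ℝ g x) :
    epd (fun y => f y + g y) i x = epd f i x + epd g i x := by
  unfold epd; rw [fderiv_fun_add hf hg]; simp

lemma epd_sub {f g : EuclideanSpace ℝ (Fin n) → E} (hf : DifferentiableAt ℝ f x)
    (hg : DifferentiableAt ℝ g x) :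
    epd (fun y => f y - g y) i x = epd f i x - epd g i x := by
  unfold epd; rw [fderiv_fun_sub hf hg]; simp

lemma epd_sum {ι : Type*} {s : Finset ι} {f : ι → EuclideanSpace ℝ (Fin n) → E}
    (hf : ∀ a ∈ s, DifferentiableAt ℝ (f a) x) :
    epd (fun y => ∑ a ∈ s, f a y) i x = ∑ a ∈ s, epd (f a) i x := by
  unfold epd; rw [fderiv_fun_sum hf]; simp

lemma epd_const_mul {f : EuclideanSpace ℝ (Fin n) → ℂ} (c : ℂ)
    (hf : DifferentiableAt ℝ f x) :
    epd (fun y => c * f y) i x = c * epd f i x :=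
  epd_clm (ContinuousLinearMap.mul ℝ ℂ c) hf i

lemma epd_const_mul_real {f : EuclideanSpace ℝ (Fin n) → ℝ} (c : ℝ)
    (hf : DifferentiableAt ℝ f x) :
    epd (fun y => c * f y) i x = c * epd f i x :=
  epd_clm (ContinuousLinearMap.mul ℝ ℝ c) hf i

lemma epd_mul {f g : EuclideanSpace ℝ (Fin n) → ℂ} (hf : DifferentiableAt ℝ f x)
    (hg : DifferentiableAt ℝ g x) :
    epd (fun y => f y * g y) i x = epd f i x * g x + f x * epd g i x := by
  unfold epd; rw [fderiv_fun_mul hf hg]; simp; ring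

lemma epd_mul_real {f g : EuclideanSpace ℝ (Fin n) → ℝ} (hf : DifferentiableAt ℝ f x)
    (hg : DifferentiableAt ℝ g x) :
    epd (fun y => f y * g y) i x = epd f i x * g x + f x * epd g i x := by
  unfold epd; rw [fderiv_fun_mul hf hg]; simp; ring

lemma epd_conj {f : EuclideanSpace ℝ (Fin n) → ℂ} (hf : DifferentiableAt ℝ f x) :
    epd (fun y => (starRingEnd ℂ) (f y)) i x = (starRingEnd ℂ) (epd f i x) :=
  epd_clm (Complex.conjCLE : ℂ ≃L[ℝ] ℂ).toContinuousLinearMap hf i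

lemma epd_re {f : EuclideanSpace ℝ (Fin n) → ℂ} (hf : DifferentiableAt ℝ f x) :
    epd (fun y => (f y).re) i x = (epd f i x).re :=
  epd_clm Complex.reCLM hf i

end EpdLemmas

/-! ### Algebraic lemmas for `rinner` -/

section RinnerLemmas

variable {N : ℕ}

lemma rinner_add_right (a b c : Fin N → ℂ) :
    rinner a (b + c) = rinner a b + rinner a c := by
  simp [rinner, mul_add, Finset.sum_add_distrib]

lemma rinner_sum_right {ι : Type*} (s : Finset ι) (a : Fin N → ℂ) (b : ι → Fin N → ℂ) :
    rinner a (∑ j ∈ s, b j) = ∑ j ∈ s, rinner a (b j) := by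
  simp only [rinner]
  rw [← Complex.re_sum]
  congr 1
  rw [Finset.sum_comm]
  congr 1; funext k
  simp [Finset.mul_sum]

lemma rinner_zero_right (a : Fin N → ℂ) : rinner a 0 = 0 := by simp [rinner]

lemma rinner_comm (a b : Fin N → ℂ) : rinner a b = rinner b a := by
  simp only [rinner]
  rw [← Complex.conj_re, map_sum]
  refine congrArg Complex.re (Finset.sum_congr rfl fun k _ => ?_)
  rw [starRingEnd_apply, StarMul.star_mul, star_star]

lemma rinner_neg_left (a b : Fin N → ℂ) : rinner (-a) b = -rinner a b := by
  simp [rinner, Finset.sum_neg_distrib]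

lemma rinner_adjoint (A : Matrix (Fin N) (Fin N) ℂ) (a b : Fin N → ℂ) :
    rinner a (A.mulVec b) = rinner (Aᴴ.mulVec a) b := by
  simp only [rinner, Matrix.mulVec, dotProduct, Matrix.conjTranspose_apply, star_sum,
    Finset.mul_sum, Finset.sum_mul]
  congr 1
  rw [Finset.sum_comm]
  refine Finset.sum_congr rfl fun k _ => Finset.sum_congr rfl fun l _ => ?_
  rw [StarMul.star_mul, star_star]
  ring

lemma rinner_skew {A : Matrix (Fin N) (Fin N) ℂ} (hA : Aᴴ = -A) (a : Fin N → ℂ) :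
    rinner a (A.mulVec a) = 0 := by
  have h1 : rinner a (A.mulVec a) = rinner (Aᴴ.mulVec a) a := rinner_adjoint A a a
  rw [hA, Matrix.neg_mulVec, rinner_neg_left] at h1
  have h2 : rinner (A.mulVec a) a = rinner a (A.mulVec a) := rinner_comm _ _
  linarith

end RinnerLemmas


/-! ### More helpers -/

section MoreHelpers

variable {n N : ℕ} {x : EuclideanSpace ℝ (Fin n)} {i : Fin n}

/-- `mulVec` by a fixed matrix as a continuous `ℝ`-linear map. -/
def mulVecCLM {N : ℕ} (A : Matrix (Fin N) (Fin N) ℂ) : (Fin N → ℂ) →L[ℝ] (Fin N → ℂ) :=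
  LinearMap.toContinuousLinearMap ((A.mulVecLin).restrictScalars ℝ)

lemma mulVecCLM_apply {N : ℕ} (A : Matrix (Fin N) (Fin N) ℂ) (v : Fin N → ℂ) :
    mulVecCLM A v = A.mulVec v := by
  simp [mulVecCLM]

lemma cd_mulVec {f : EuclideanSpace ℝ (Fin n) → Fin N → ℂ} (A : Matrix (Fin N) (Fin N) ℂ)
    (hf : ContDiff ℝ (⊤:ℕ∞) f) : ContDiff ℝ (⊤:ℕ∞) (fun y => A.mulVec (f y)) := by
  have : (fun y => A.mulVec (f y)) = fun y => mulVecCLM A (f y) := by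
    funext y; rw [mulVecCLM_apply]
  rw [this]
  exact (mulVecCLM A).contDiff.comp hf

lemma epd_mulVec {f : EuclideanSpace ℝ (Fin n) → Fin N → ℂ} (A : Matrix (Fin N) (Fin N) ℂ)
    (hf : DifferentiableAt ℝ f x) :
    epd (fun y => A.mulVec (f y)) i x = A.mulVec (epd f i x) := by
  have : (fun y => A.mulVec (f y)) = fun y => mulVecCLM A (f y) := by
    funext y; rw [mulVecCLM_apply]
  rw [this, epd_clm (mulVecCLM A) hf, mulVecCLM_apply]

lemma mulVec_sumv {ι : Type*} (s : Finset ι) (A : Matrix (Fin N) (Fin N) ℂ)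
    (v : ι → Fin N → ℂ) : A.mulVec (∑ j ∈ s, v j) = ∑ j ∈ s, A.mulVec (v j) := by
  exact map_sum (Matrix.mulVecLin A) v s

lemma rinner_sum_left {ι : Type*} (s : Finset ι) (a : ι → Fin N → ℂ) (b : Fin N → ℂ) :
    rinner (∑ j ∈ s, a j) b = ∑ j ∈ s, rinner (a j) b := by
  rw [rinner_comm, rinner_sum_right]
  exact Finset.sum_congr rfl fun j _ => rinner_comm _ _

lemma rinner_zero_left (b : Fin N → ℂ) : rinner (0 : Fin N → ℂ) b = 0 := by
  rw [rinner_comm]; exact rinner_zero_right b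

lemma rinnerV_add_right {m : ℕ} (a b c : Fin m → Fin N → ℂ) :
    rinnerV a (fun α => b α + c α) = rinnerV a b + rinnerV a c := by
  simp only [rinnerV]
  rw [← Finset.sum_add_distrib]
  exact Finset.sum_congr rfl fun α _ => rinner_add_right _ _ _

lemma rinnerV_sum_right {m : ℕ} {ι : Type*} (s : Finset ι) (a : Fin m → Fin N → ℂ)
    (b : ι → Fin m → Fin N → ℂ) :
    rinnerV a (fun α => ∑ j ∈ s, b j α) = ∑ j ∈ s, rinnerV a (b j) := by
  simp only [rinnerV]
  rw [Finset.sum_comm]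
  exact Finset.sum_congr rfl fun α _ => rinner_sum_right s _ _

lemma rinnerV_zero_right {m : ℕ} (a : Fin m → Fin N → ℂ) :
    rinnerV a 0 = 0 := by
  simp only [rinnerV, Pi.zero_apply]
  exact Finset.sum_eq_zero fun α _ => rinner_zero_right _

/-- Product rule for the real Hermitian pairing. -/
lemma epd_rinner {f g : EuclideanSpace ℝ (Fin n) → Fin N → ℂ}
    (hf : ContDiff ℝ (⊤:ℕ∞) f) (hg : ContDiff ℝ (⊤:ℕ∞) g) (i : Fin n)
    (x : EuclideanSpace ℝ (Fin n)) :
    epd (fun y => rinner (f y) (g y)) i x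
      = rinner (epd f i x) (g x) + rinner (f x) (epd g i x) := by
  have hfd : Differentiable ℝ f := hf.differentiable (by simp)
  have hgd : Differentiable ℝ g := hg.differentiable (by simp)
  have hfk : ∀ k, DifferentiableAt ℝ (fun y => f y k) x := fun k =>
    ((contDiff_pi.mp hf k).differentiable (by simp)) x
  have hgk : ∀ k, DifferentiableAt ℝ (fun y => g y k) x := fun k =>
    ((contDiff_pi.mp hg k).differentiable (by simp)) x
  have hconj : ∀ k, DifferentiableAt ℝ (fun y => star (f y k)) x := fun k =>
    (Complex.conjCLE : ℂ ≃L[ℝ] ℂ).toContinuousLinearMap.differentiableAt.comp x (hfk k)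
  have h0 : (fun y => rinner (f y) (g y))
      = fun y => (∑ k, star (f y k) * g y k).re := rfl
  rw [h0]
  rw [epd_re (by exact DifferentiableAt.fun_sum fun k _ => (hconj k).fun_mul (hgk k))]
  rw [epd_sum (fun k _ => (hconj k).fun_mul (hgk k))]
  rw [Complex.re_sum]
  have hterm : ∀ k, epd (fun y => star (f y k) * g y k) i x
      = star (epd (fun y => f y k) i x) * g x k + star (f x k) * epd (fun y => g y k) i x := by
    intro k
    rw [epd_mul (hconj k) (hgk k)]
    congr 2
    have : (fun y => star (f y k)) = fun y => (starRingEnd ℂ) (f y k) := rfl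
    rw [this, epd_conj (hfk k)]
    rfl
  have hre : ∀ k, (epd (fun y => star (f y k) * g y k) i x).re
      = (star (epd (fun y => f y k) i x) * g x k).re + (star (f x k) * epd (fun y => g y k) i x).re := by
    intro k; rw [hterm k, Complex.add_re]
  rw [Finset.sum_congr rfl fun k _ => hre k, Finset.sum_add_distrib]
  congr 1
  · simp only [rinner, ← Complex.re_sum]
    congr 2
    funext k
    rw [epd_apply (hfd x) i k]
  · simp only [rinner, ← Complex.re_sum]
    congr 2
    funext k
    rw [epd_apply (hgd x) i k]

end MoreHelpers

lemma cd_rinner {n N : ℕ} {f g : EuclideanSpace ℝ (Fin n) → Fin N → ℂ}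
    (hf : ContDiff ℝ (⊤:ℕ∞) f) (hg : ContDiff ℝ (⊤:ℕ∞) g) :
    ContDiff ℝ (⊤:ℕ∞) (fun y => rinner (f y) (g y)) := by
  have h0 : (fun y => rinner (f y) (g y)) = fun y => (∑ k, star (f y k) * g y k).re := rfl
  rw [h0]
  exact Complex.reCLM.contDiff.comp (ContDiff.sum fun k _ =>
    ((Complex.conjCLE.toContinuousLinearMap.contDiff).comp (contDiff_pi.mp hf k)).mul
      (contDiff_pi.mp hg k))


/-- for the flat-target Dirac-harmonic map system (`Δφ = 0`, `Dψ = 0`)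
the stress-energy tensor is symmetric, divergence-free, and has trace `(2-n)|dφ|²`. -/
theorem dhStress_symm_divFree_trace {n N m : ℕ} (hn : 1 ≤ n) (hN : 1 ≤ N) (hm : 1 ≤ m)
    (γ : Fin n → Matrix (Fin N) (Fin N) ℂ) (hγ : IsCliffordFamily γ)
    (φ : EuclideanSpace ℝ (Fin n) → (Fin m → ℝ)) (hφ : ContDiff ℝ (⊤ : ℕ∞) φ)
    (ψ : EuclideanSpace ℝ (Fin n) → (Fin m → Fin N → ℂ)) (hψ : ContDiff ℝ (⊤ : ℕ∞) ψ)
    (hharm : IsHarmonic φ) (hdirac : ∀ x, DiracV γ ψ x = 0) :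
    (∀ i j x, dhStress γ φ ψ i j x = dhStress γ φ ψ j i x) ∧
    (∀ i x, ∑ j, epd (fun y => dhStress γ φ ψ i j y) j x = 0) ∧
    (∀ x, ∑ i, dhStress γ φ ψ i i x = (2 - (n : ℝ)) * ∑ i', dphiInner φ i' i' x) := by
  obtain ⟨hsk, hcl⟩ := hγ
  have hψd : Differentiable ℝ ψ := hψ.differentiable (by simp)
  have hφd : Differentiable ℝ φ := hφ.differentiable (by simp)
  refine ⟨?_, ?_, ?_⟩
  · -- symmetry
    intro i j x
    unfold dhStress
    have h1 : dphiInner φ i j x = dphiInner φ j i x := by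
      unfold dphiInner; exact Finset.sum_congr rfl fun a _ => mul_comm _ _
    have h2 : (if i = j then (1:ℝ) else 0) = (if j = i then 1 else 0) := by
      simp only [eq_comm]
    rw [h1, h2, show (fun α => (γ i).mulVec (epd ψ j x α) + (γ j).mulVec (epd ψ i x α)) =
      (fun α => (γ j).mulVec (epd ψ i x α) + (γ i).mulVec (epd ψ j x α)) from
      funext fun α => add_comm _ _]
  · -- divergence free
    intro i x
    -- spinor component functions
    have hU : ∀ α, ContDiff ℝ (⊤:ℕ∞) (fun y => ψ y α) := fun α => contDiff_pi.mp hψ α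
    have hUd : ∀ α, Differentiable ℝ (fun y => ψ y α) :=
      fun α => (hU α).differentiable (by simp)
    have hepdψ : ∀ (j : Fin n) y α, epd ψ j y α = epd (fun z => ψ z α) j y :=
      fun j y α => epd_apply (hψd y) j α
    have hdiffU2 : ∀ α (j : Fin n), Differentiable ℝ (epd (fun z => ψ z α) j) :=
      fun α j => epd_diff (hU α) j
    -- φ component derivative functions
    have hφa : ∀ a, ContDiff ℝ (⊤:ℕ∞) (fun y => φ y a) := fun a => contDiff_pi.mp hφ a
    have hP : ∀ a (j : Fin n), ContDiff ℝ (⊤:ℕ∞) (epd (fun y => φ y a) j) :=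
      fun a j => epd_contDiff (hφa a) j
    have hPd : ∀ a (j : Fin n), Differentiable ℝ (epd (fun y => φ y a) j) :=
      fun a j => (hP a j).differentiable (by simp)
    have hepdφ : ∀ (j : Fin n) y a, epd φ j y a = epd (fun z => φ z a) j y :=
      fun j y a => epd_apply (hφd y) j a
    have hdphi : ∀ (j l : Fin n) y, dphiInner φ j l y
        = ∑ a, epd (fun z => φ z a) j y * epd (fun z => φ z a) l y := by
      intro j l y
      unfold dphiInner
      exact Finset.sum_congr rfl fun a _ => by rw [hepdφ j y a, hepdφ l y a]
    have hPcomm : ∀ a (j l : Fin n) y, epd (epd (fun z => φ z a) j) l y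
        = epd (epd (fun z => φ z a) l) j y := fun a j l y => epd_comm (hφa a) j l y
    have hharmP : ∀ a y, ∑ j, epd (epd (fun z => φ z a) j) j y = 0 := by
      intro a y
      have h0 := congrFun (hharm y) a
      rw [Finset.sum_apply] at h0
      calc ∑ j, epd (epd (fun z => φ z a) j) j y
          = ∑ j, epd (epd φ j) j y a := by
            refine Finset.sum_congr rfl fun j _ => ?_
            rw [epd_apply (epd_diff hφ j y) j a]
            exact epd_congr fun z => (hepdφ j z a).symm
        _ = 0 := h0
    -- Dirac relations
    have hDv : ∀ y α, ∑ j, (γ j).mulVec (epd (fun z => ψ z α) j y) = 0 := by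
      intro y α
      have h0 := congrFun (hdirac y) α
      simp only [DiracV, Pi.zero_apply] at h0
      calc ∑ j, (γ j).mulVec (epd (fun z => ψ z α) j y)
          = ∑ j, (γ j).mulVec (epd ψ j y α) := by
            refine Finset.sum_congr rfl fun j _ => ?_
            rw [hepdψ j y α]
        _ = 0 := h0
    have hD' : ∀ (d : Fin n) α y,
        ∑ j, (γ j).mulVec (epd (epd (fun z => ψ z α) j) d y) = 0 := by
      intro d α y
      have h1 : epd (fun z => ∑ j, (γ j).mulVec (epd (fun w => ψ w α) j z)) d y
          = ∑ j, (γ j).mulVec (epd (epd (fun z => ψ z α) j) d y) := by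
        rw [epd_sum (fun j _ => ((cd_mulVec (γ j) (epd_contDiff (hU α) j)).differentiable
          (by simp) y))]
        exact Finset.sum_congr rfl fun j _ => epd_mulVec (γ j) (hdiffU2 α j y)
      rw [← h1, epd_congr (fun z => hDv z α), epd_zero]
    -- Laplacian of spinor components vanishes
    have hLap : ∀ α y, ∑ j, epd (epd (fun z => ψ z α) j) j y = 0 := by
      intro α y
      have hscomm : ∀ (j d : Fin n), epd (epd (fun z => ψ z α) j) d y
          = epd (epd (fun z => ψ z α) d) j y := fun j d => epd_comm (hU α) j d y
      have hA : ∑ p, ∑ q, (γ p * γ q).mulVec (epd (epd (fun z => ψ z α) q) p y) = 0 := by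
        refine Finset.sum_eq_zero fun p _ => ?_
        calc ∑ q, (γ p * γ q).mulVec (epd (epd (fun z => ψ z α) q) p y)
            = (γ p).mulVec (∑ q, (γ q).mulVec (epd (epd (fun z => ψ z α) q) p y)) := by
              rw [mulVec_sumv]
              exact Finset.sum_congr rfl fun q _ => (Matrix.mulVec_mulVec _ _ _).symm
          _ = 0 := by rw [hD' p α y, Matrix.mulVec_zero]
      have hB : ∑ p, ∑ q, (γ p * γ q).mulVec (epd (epd (fun z => ψ z α) p) q y) = 0 := by
        rw [← hA]
        exact Finset.sum_congr rfl fun p _ => Finset.sum_congr rfl fun q _ => by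
          rw [hscomm p q]
      have hsum : ∑ p, ∑ q,
          ((γ p * γ q + γ q * γ p).mulVec (epd (epd (fun z => ψ z α) p) q y)) = 0 := by
        simp only [Matrix.add_mulVec, Finset.sum_add_distrib]
        rw [hB, zero_add, Finset.sum_comm]
        exact hA
      have hval : ∑ p, ∑ q,
          ((γ p * γ q + γ q * γ p).mulVec (epd (epd (fun z => ψ z α) p) q y))
          = (-2 : ℂ) • ∑ p, epd (epd (fun z => ψ z α) p) p y := by
        rw [Finset.smul_sum]
        refine Finset.sum_congr rfl fun p _ => ?_
        rw [Finset.sum_congr rfl fun q _ => by rw [hcl p q]]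
        rw [Finset.sum_eq_single p]
        · rw [if_pos rfl, Matrix.smul_mulVec, Matrix.one_mulVec]
        · intro q _ hq
          rw [if_neg (fun h => hq h.symm), Matrix.zero_mulVec]
        · intro h; exact absurd (Finset.mem_univ p) h
      rw [hval] at hsum
      rcases smul_eq_zero.mp hsum with h | h
      · exact absurd h (by norm_num)
      · exact h
    -- smoothness of the pieces
    have hdphi_cd : ∀ (j l : Fin n), ContDiff ℝ (⊤:ℕ∞) (fun y => dphiInner φ j l y) := by
      intro j l
      rw [show (fun y => dphiInner φ j l y)
        = fun y => ∑ a, epd (fun z => φ z a) j y * epd (fun z => φ z a) l y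
        from funext (hdphi j l)]
      exact ContDiff.sum fun a _ => (hP a j).mul (hP a l)
    have hE_cd : ContDiff ℝ (⊤:ℕ∞) (fun y => ∑ i', dphiInner φ i' i' y) :=
      ContDiff.sum fun i' _ => hdphi_cd i' i'
    have hG_cd : ∀ (j : Fin n) α, ContDiff ℝ (⊤:ℕ∞)
        (fun y => (γ i).mulVec (epd (fun z => ψ z α) j y)
          + (γ j).mulVec (epd (fun z => ψ z α) i y)) := fun j α =>
      (cd_mulVec (γ i) (epd_contDiff (hU α) j)).add (cd_mulVec (γ j) (epd_contDiff (hU α) i))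
    -- splitting the stress tensor derivative
    have hsplit : ∀ j : Fin n, epd (fun y => dhStress γ φ ψ i j y) j x =
        2 * epd (fun y => dphiInner φ i j y) j x
        - (if i = j then (1:ℝ) else 0) * epd (fun y => ∑ i', dphiInner φ i' i' y) j x
        + (1/2 : ℝ) * ∑ α, epd (fun y => rinner (ψ y α)
            ((γ i).mulVec (epd (fun z => ψ z α) j y)
              + (γ j).mulVec (epd (fun z => ψ z α) i y))) j x := by
      intro j
      have hfuneq : (fun y => dhStress γ φ ψ i j y)
          = fun y => (2 * dphiInner φ i j y
              - (if i = j then (1:ℝ) else 0) * ∑ i', dphiInner φ i' i' y)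
            + (1/2 : ℝ) * ∑ α, rinner (ψ y α)
              ((γ i).mulVec (epd (fun z => ψ z α) j y)
                + (γ j).mulVec (epd (fun z => ψ z α) i y)) := by
        funext y
        unfold dhStress rinnerV
        congr 2
        refine Finset.sum_congr rfl fun α _ => ?_
        show rinner (ψ y α) ((γ i).mulVec (epd ψ j y α) + (γ j).mulVec (epd ψ i y α)) = _
        rw [hepdψ j y α, hepdψ i y α]
      rw [hfuneq]
      have hd1 : DifferentiableAt ℝ (fun y => 2 * dphiInner φ i j y
          - (if i = j then (1:ℝ) else 0) * ∑ i', dphiInner φ i' i' y) x :=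
        (((contDiff_const.mul (hdphi_cd i j)).sub
          (contDiff_const.mul hE_cd)).differentiable (by simp)) x
      have hd2 : DifferentiableAt ℝ (fun y => (1/2 : ℝ) * ∑ α, rinner (ψ y α)
          ((γ i).mulVec (epd (fun z => ψ z α) j y)
            + (γ j).mulVec (epd (fun z => ψ z α) i y))) x :=
        ((contDiff_const.mul (ContDiff.sum fun α _ =>
          cd_rinner (hU α) (hG_cd j α))).differentiable (by simp)) x
      rw [epd_add hd1 hd2]
      have hd3 : DifferentiableAt ℝ (fun y => 2 * dphiInner φ i j y) x :=
        ((contDiff_const.mul (hdphi_cd i j)).differentiable (by simp)) x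
      have hd4 : DifferentiableAt ℝ (fun y => (if i = j then (1:ℝ) else 0)
          * ∑ i', dphiInner φ i' i' y) x :=
        ((contDiff_const.mul hE_cd).differentiable (by simp)) x
      rw [epd_sub hd3 hd4]
      rw [epd_const_mul_real 2 ((hdphi_cd i j).differentiable (by simp) x)]
      rw [epd_const_mul_real _ (hE_cd.differentiable (by simp) x)]
      rw [epd_const_mul_real ((1:ℝ)/2) ((ContDiff.sum fun α _ =>
        cd_rinner (hU α) (hG_cd j α)).differentiable (by simp) x)]
      rw [epd_sum (fun α _ => ((cd_rinner (hU α) (hG_cd j α)).differentiable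
        (by simp) x))]
    -- derivative of dphiInner
    have hdphi_epd : ∀ (j l d : Fin n), epd (fun y => dphiInner φ j l y) d x
        = ∑ a, (epd (epd (fun z => φ z a) j) d x * epd (fun z => φ z a) l x
            + epd (fun z => φ z a) j x * epd (epd (fun z => φ z a) l) d x) := by
      intro j l d
      rw [show (fun y => dphiInner φ j l y)
        = fun y => ∑ a, epd (fun z => φ z a) j y * epd (fun z => φ z a) l y
        from funext (hdphi j l)]
      rw [epd_sum (fun a _ => ((hPd a j x).fun_mul (hPd a l x)))]
      exact Finset.sum_congr rfl fun a _ => epd_mul_real (hPd a j x) (hPd a l x)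
    -- Claim A1
    have hA1 : ∑ j, epd (fun y => dphiInner φ i j y) j x
        = ∑ j, ∑ a, epd (epd (fun z => φ z a) i) j x * epd (fun z => φ z a) j x := by
      rw [Finset.sum_congr rfl fun j _ => hdphi_epd i j j]
      simp only [Finset.sum_add_distrib]
      have hzero : ∑ j, ∑ a, epd (fun z => φ z a) i x * epd (epd (fun z => φ z a) j) j x
          = 0 := by
        rw [Finset.sum_comm]
        refine Finset.sum_eq_zero fun a _ => ?_
        rw [← Finset.mul_sum, hharmP a x, mul_zero]
      rw [hzero, add_zero]
    -- Claim A2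
    have hA2 : epd (fun y => ∑ i', dphiInner φ i' i' y) i x
        = 2 * ∑ j, ∑ a, epd (epd (fun z => φ z a) i) j x * epd (fun z => φ z a) j x := by
      rw [epd_sum (fun i' _ => ((hdphi_cd i' i').differentiable (by simp) x))]
      rw [Finset.sum_congr rfl fun j _ => hdphi_epd j j i]
      rw [Finset.mul_sum]
      refine Finset.sum_congr rfl fun j _ => ?_
      rw [Finset.mul_sum]
      refine Finset.sum_congr rfl fun a _ => ?_
      rw [hPcomm a j i x]
      ring
    -- Claim B : spinor part
    have hB : ∑ j, ∑ α, epd (fun y => rinner (ψ y α)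
        ((γ i).mulVec (epd (fun z => ψ z α) j y)
          + (γ j).mulVec (epd (fun z => ψ z α) i y))) j x = 0 := by
      have hterm : ∀ (j : Fin n) α, epd (fun y => rinner (ψ y α)
          ((γ i).mulVec (epd (fun z => ψ z α) j y)
            + (γ j).mulVec (epd (fun z => ψ z α) i y))) j x
          = rinner (epd (fun z => ψ z α) j x)
              ((γ i).mulVec (epd (fun z => ψ z α) j x))
            + rinner (epd (fun z => ψ z α) j x)
              ((γ j).mulVec (epd (fun z => ψ z α) i x))
            + (rinner (ψ x α) ((γ i).mulVec (epd (epd (fun z => ψ z α) j) j x))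
            + rinner (ψ x α) ((γ j).mulVec (epd (epd (fun z => ψ z α) i) j x))) := by
        intro j α
        rw [epd_rinner (hU α) (hG_cd j α) j x]
        have hGepd : epd (fun y => (γ i).mulVec (epd (fun z => ψ z α) j y)
            + (γ j).mulVec (epd (fun z => ψ z α) i y)) j x
            = (γ i).mulVec (epd (epd (fun z => ψ z α) j) j x)
              + (γ j).mulVec (epd (epd (fun z => ψ z α) i) j x) := by
          rw [epd_add (((cd_mulVec (γ i) (epd_contDiff (hU α) j)).differentiable
              (by simp)) x)
            (((cd_mulVec (γ j) (epd_contDiff (hU α) i)).differentiable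
              (by simp)) x)]
          rw [epd_mulVec (γ i) (hdiffU2 α j x), epd_mulVec (γ j) (hdiffU2 α i x)]
        rw [hGepd, rinner_add_right, rinner_add_right]
      rw [Finset.sum_congr rfl fun j _ => Finset.sum_congr rfl fun α _ => hterm j α]
      rw [Finset.sum_comm]
      refine Finset.sum_eq_zero fun α _ => ?_
      simp only [Finset.sum_add_distrib]
      have t1 : ∑ j, rinner (epd (fun z => ψ z α) j x)
          ((γ i).mulVec (epd (fun z => ψ z α) j x)) = 0 :=
        Finset.sum_eq_zero fun j _ => rinner_skew (hsk i) _
      have t2 : ∑ j, rinner (epd (fun z => ψ z α) j x)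
          ((γ j).mulVec (epd (fun z => ψ z α) i x)) = 0 := by
        have h1 : ∀ j : Fin n, rinner (epd (fun z => ψ z α) j x)
            ((γ j).mulVec (epd (fun z => ψ z α) i x))
            = - rinner ((γ j).mulVec (epd (fun z => ψ z α) j x))
                (epd (fun z => ψ z α) i x) := by
          intro j
          rw [rinner_adjoint, hsk j, Matrix.neg_mulVec, rinner_neg_left]
        rw [Finset.sum_congr rfl fun j _ => h1 j, Finset.sum_neg_distrib,
          ← rinner_sum_left, hDv x α, rinner_zero_left, neg_zero]
      have t3 : ∑ j, rinner (ψ x α)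
          ((γ i).mulVec (epd (epd (fun z => ψ z α) j) j x)) = 0 := by
        rw [← rinner_sum_right, ← mulVec_sumv, hLap α x, Matrix.mulVec_zero,
          rinner_zero_right]
      have t4 : ∑ j, rinner (ψ x α)
          ((γ j).mulVec (epd (epd (fun z => ψ z α) i) j x)) = 0 := by
        have h1 : ∀ j : Fin n, epd (epd (fun z => ψ z α) i) j x
            = epd (epd (fun z => ψ z α) j) i x := fun j => epd_comm (hU α) i j x
        rw [Finset.sum_congr rfl fun j _ => by rw [h1 j], ← rinner_sum_right,
          hD' i α x, rinner_zero_right]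
      rw [t1, t2, t3, t4]
      ring
    -- assemble
    calc ∑ j, epd (fun y => dhStress γ φ ψ i j y) j x
        = ∑ j, (2 * epd (fun y => dphiInner φ i j y) j x
            - (if i = j then (1:ℝ) else 0) * epd (fun y => ∑ i', dphiInner φ i' i' y) j x
            + (1/2 : ℝ) * ∑ α, epd (fun y => rinner (ψ y α)
                ((γ i).mulVec (epd (fun z => ψ z α) j y)
                  + (γ j).mulVec (epd (fun z => ψ z α) i y))) j x) :=
          Finset.sum_congr rfl fun j _ => hsplit j
      _ = 0 := by
          simp only [Finset.sum_add_distrib, Finset.sum_sub_distrib]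
          rw [← Finset.mul_sum, ← Finset.mul_sum, hA1, hB, mul_zero, add_zero]
          have hdelta : ∑ j, (if i = j then (1:ℝ) else 0)
              * epd (fun y => ∑ i', dphiInner φ i' i' y) j x
              = epd (fun y => ∑ i', dphiInner φ i' i' y) i x := by
            simp [ite_mul, Finset.sum_ite_eq]
          rw [hdelta, hA2]
          ring
  · -- trace
    intro x
    have hkey : ∀ i, dhStress γ φ ψ i i x
        = 2 * dphiInner φ i i x - (∑ i', dphiInner φ i' i' x)
          + rinnerV (ψ x) (fun α => (γ i).mulVec (epd ψ i x α)) := by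
      intro i
      unfold dhStress
      rw [if_pos rfl, one_mul]
      congr 1
      rw [rinnerV_add_right (ψ x) (fun α => (γ i).mulVec (epd ψ i x α))
        (fun α => (γ i).mulVec (epd ψ i x α))]
      ring
    rw [Finset.sum_congr rfl fun i _ => hkey i]
    have hz : ∑ i, rinnerV (ψ x) (fun α => (γ i).mulVec (epd ψ i x α)) = 0 := by
      rw [← rinnerV_sum_right Finset.univ (ψ x) (fun i α => (γ i).mulVec (epd ψ i x α))]
      have : (fun α => ∑ i, (γ i).mulVec (epd ψ i x α)) = DiracV γ ψ x := rfl
      rw [this, hdirac x, rinnerV_zero_right]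
    rw [Finset.sum_add_distrib, hz, Finset.sum_sub_distrib, ← Finset.mul_sum,
      Finset.sum_const, Finset.card_univ, Fintype.card_fin]
    ring
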